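/- Let G be the disjoint union of two isomorphic graphs H_1 and H_2 with vertex sets V = {v_1, …, v_k} and W = {w_1, …, w_k} respectively, where the map f with f(v_i) = w_i for 1 ≤ i ≤ k is a graph isomorphism from H_1 to H_2. Then there exist k bicliques B_1, …, B_k with partite sets (X_1, Y_1), …, (X_k, Y_k) such that: (i) B_1, …, B_k form an odd cover of G, and (ii) X_i = {v_i, w_i} for all 1 ≤ i ≤ k. In particular, b_2(H + H) ≤ |V(H)| for every graph H. -/

import Mathlib

open Finset

/-- The number of bicliques in the collection `f` that cover the pair `(u, v)`. -/
noncomputable def coversCount {V : Type*} {m : ℕ} (f : Fin m → Finset V × Finset V) (u v : V) : ℕ :=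
  Nat.card {i : Fin m // (u ∈ (f i).1 ∧ v ∈ (f i).2) ∨ (u ∈ (f i).2 ∧ v ∈ (f i).1)}

/-- `f` is an odd cover of `G`: a collection of bicliques (pairs of disjoint finite sets of
vertices) covering each edge of `G` an odd number of times and each nonedge an even number
of times. -/
def IsOddCover {V : Type*} (G : SimpleGraph V) {m : ℕ}
    (f : Fin m → Finset V × Finset V) : Prop :=
  (∀ i, Disjoint (f i).1 (f i).2) ∧
  ∀ u v : V, u ≠ v → (G.Adj u v ↔ Odd (coversCount f u v))

/-- `b2 G` is the minimum cardinality of an odd cover of `G`. -/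
noncomputable def b2 {V : Type*} (G : SimpleGraph V) : ℕ :=
  sInf {m : ℕ | ∃ f : Fin m → Finset V × Finset V, IsOddCover G f}

/-- `r2 G` is the rank over `𝔽₂` of the adjacency matrix of `G`. -/
noncomputable def r2 {V : Type*} [Fintype V] (G : SimpleGraph V) : ℕ :=
  letI := Classical.decRel G.Adj
  (SimpleGraph.adjMatrix (ZMod 2) G).rank

/-- Disjoint union of an indexed family of graphs, on the sigma type of the vertex types. -/
def sigmaSum {ι : Type*} {α : ι → Type*} (G : (i : ι) → SimpleGraph (α i)) :
    SimpleGraph ((i : ι) × α i) where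
  Adj x y := ∃ (i : ι) (a b : α i), (G i).Adj a b ∧ x = ⟨i, a⟩ ∧ y = ⟨i, b⟩
  symm := by constructor; rintro x y ⟨i, a, b, h, rfl, rfl⟩; exact ⟨i, b, a, h.symm, rfl, rfl⟩
  loopless := by
    constructor
    rintro x ⟨i, a, b, h, rfl, h2⟩
    obtain ⟨-, h3⟩ := Sigma.mk.inj_iff.mp h2
    exact (G i).irrefl (v := a) (by cases h3; exact h)



open Classical in
noncomputable def oc {k : ℕ} (H : SimpleGraph (Fin k)) (i : Fin k) :
    Finset (Fin k ⊕ Fin k) × Finset (Fin k ⊕ Fin k) :=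
  ({Sum.inl i, Sum.inr i},
   ((univ.filter fun j => i < j ∧ H.Adj i j).image Sum.inl) ∪
   ((univ.filter fun j => j < i ∧ H.Adj i j).image Sum.inr))

lemma mem_ocX_inl {k : ℕ} (H : SimpleGraph (Fin k)) (i a : Fin k) :
    Sum.inl a ∈ (oc H i).1 ↔ a = i := by simp [oc]

lemma mem_ocX_inr {k : ℕ} (H : SimpleGraph (Fin k)) (i a : Fin k) :
    Sum.inr a ∈ (oc H i).1 ↔ a = i := by simp [oc]

lemma mem_ocY_inl {k : ℕ} (H : SimpleGraph (Fin k)) (i a : Fin k) :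
    Sum.inl a ∈ (oc H i).2 ↔ i < a ∧ H.Adj i a := by
  classical simp [oc]

lemma mem_ocY_inr {k : ℕ} (H : SimpleGraph (Fin k)) (i a : Fin k) :
    Sum.inr a ∈ (oc H i).2 ↔ a < i ∧ H.Adj i a := by
  classical simp [oc]

lemma coversCount_eq_zero {V : Type*} {m : ℕ} {f : Fin m → Finset V × Finset V} {u v : V}
    (h : ∀ i : Fin m,
      ¬ ((u ∈ (f i).1 ∧ v ∈ (f i).2) ∨ (u ∈ (f i).2 ∧ v ∈ (f i).1))) :
    coversCount f u v = 0 := by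
  rw [coversCount]
  exact @Nat.card_of_isEmpty _ ⟨fun x => h x.1 x.2⟩

lemma coversCount_pair {V : Type*} {m : ℕ} {f : Fin m → Finset V × Finset V} {u v : V}
    {a b : Fin m} (hab : a ≠ b) (p q : Prop) [Decidable p] [Decidable q]
    (h : ∀ i : Fin m,
      (((u ∈ (f i).1 ∧ v ∈ (f i).2) ∨ (u ∈ (f i).2 ∧ v ∈ (f i).1))) ↔
        ((i = a ∧ p) ∨ (i = b ∧ q))) :
    coversCount f u v = (if p then 1 else 0) + (if q then 1 else 0) := by
  classical
  rw [coversCount, Nat.card_congr (Equiv.subtypeEquivRight h), Nat.card_eq_fintype_card,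
    Fintype.card_subtype, filter_or]
  have h1 : (univ.filter fun i : Fin m => i = a ∧ p) = if p then {a} else ∅ := by
    split_ifs with h <;> ext i <;> simp [h]
  have h2 : (univ.filter fun i : Fin m => i = b ∧ q) = if q then {b} else ∅ := by
    split_ifs with h <;> ext i <;> simp [h]
  rw [h1, h2, card_union_of_disjoint]
  · split_ifs <;> simp
  · split_ifs <;> simp [hab, hab.symm]

open Classical in
lemma oc_isOddCover {k : ℕ} (H : SimpleGraph (Fin k)) : IsOddCover (H ⊕g H) (oc H) := by
  classical
  constructor
  · intro i
    rw [Finset.disjoint_left]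
    intro x hx hy
    rcases x with a | a
    · rw [mem_ocX_inl] at hx; rw [mem_ocY_inl] at hy; subst hx; exact lt_irrefl _ hy.1
    · rw [mem_ocX_inr] at hx; rw [mem_ocY_inr] at hy; subst hx; exact lt_irrefl _ hy.1
  · intro u v huv
    rcases u with a | a <;> rcases v with b | b
    · -- inl inl
      have hab : a ≠ b := by simpa using huv
      have hcong : ∀ i : Fin k,
          ((Sum.inl a ∈ (oc H i).1 ∧ Sum.inl b ∈ (oc H i).2) ∨
            (Sum.inl a ∈ (oc H i).2 ∧ Sum.inl b ∈ (oc H i).1)) ↔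
          ((i = a ∧ (a < b ∧ H.Adj a b)) ∨ (i = b ∧ (b < a ∧ H.Adj a b))) := by
        intro i
        simp only [mem_ocX_inl, mem_ocY_inl]
        constructor
        · rintro (⟨rfl, h1, h2⟩ | ⟨⟨h1, h2⟩, rfl⟩)
          · exact Or.inl ⟨rfl, h1, h2⟩
          · exact Or.inr ⟨rfl, h1, h2.symm⟩
        · rintro (⟨rfl, h1, h2⟩ | ⟨rfl, h1, h2⟩)
          · exact Or.inl ⟨rfl, h1, h2⟩
          · exact Or.inr ⟨⟨h1, h2.symm⟩, rfl⟩
      rw [coversCount_pair hab _ _ hcong]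
      by_cases hadj : H.Adj a b <;> rcases hab.lt_or_gt with h | h <;>
        simp [hadj, h, h.asymm, Nat.odd_iff]
    · -- inl inr
      by_cases hab : a = b
      · subst hab
        rw [coversCount_eq_zero ?_]
        · simp
        · intro i
          simp only [mem_ocX_inl, mem_ocX_inr, mem_ocY_inl, mem_ocY_inr]
          rintro (⟨rfl, h1, h2⟩ | ⟨⟨h1, h2⟩, rfl⟩)
          · exact lt_irrefl _ h1
          · exact lt_irrefl _ h1
      · have hcong : ∀ i : Fin k,
            ((Sum.inl a ∈ (oc H i).1 ∧ Sum.inr b ∈ (oc H i).2) ∨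
              (Sum.inl a ∈ (oc H i).2 ∧ Sum.inr b ∈ (oc H i).1)) ↔
            ((i = a ∧ (b < a ∧ H.Adj a b)) ∨ (i = b ∧ (b < a ∧ H.Adj a b))) := by
          intro i
          simp only [mem_ocX_inl, mem_ocX_inr, mem_ocY_inl, mem_ocY_inr]
          constructor
          · rintro (⟨rfl, h1, h2⟩ | ⟨⟨h1, h2⟩, rfl⟩)
            · exact Or.inl ⟨rfl, h1, h2⟩
            · exact Or.inr ⟨rfl, h1, h2.symm⟩
          · rintro (⟨rfl, h1, h2⟩ | ⟨rfl, h1, h2⟩)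
            · exact Or.inl ⟨rfl, h1, h2⟩
            · exact Or.inr ⟨⟨h1, h2.symm⟩, rfl⟩
        rw [coversCount_pair hab _ _ hcong]
        by_cases hc : b < a ∧ H.Adj a b <;> simp [hc, Nat.odd_iff]
    · -- inr inl
      by_cases hab : a = b
      · subst hab
        rw [coversCount_eq_zero ?_]
        · simp
        · intro i
          simp only [mem_ocX_inl, mem_ocX_inr, mem_ocY_inl, mem_ocY_inr]
          rintro (⟨rfl, h1, h2⟩ | ⟨⟨h1, h2⟩, rfl⟩)
          · exact lt_irrefl _ h1
          · exact lt_irrefl _ h1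
      · have hcong : ∀ i : Fin k,
            ((Sum.inr a ∈ (oc H i).1 ∧ Sum.inl b ∈ (oc H i).2) ∨
              (Sum.inr a ∈ (oc H i).2 ∧ Sum.inl b ∈ (oc H i).1)) ↔
            ((i = a ∧ (a < b ∧ H.Adj a b)) ∨ (i = b ∧ (a < b ∧ H.Adj a b))) := by
          intro i
          simp only [mem_ocX_inl, mem_ocX_inr, mem_ocY_inl, mem_ocY_inr]
          constructor
          · rintro (⟨rfl, h1, h2⟩ | ⟨⟨h1, h2⟩, rfl⟩)
            · exact Or.inl ⟨rfl, h1, h2⟩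
            · exact Or.inr ⟨rfl, h1, h2.symm⟩
          · rintro (⟨rfl, h1, h2⟩ | ⟨rfl, h1, h2⟩)
            · exact Or.inl ⟨rfl, h1, h2⟩
            · exact Or.inr ⟨⟨h1, h2.symm⟩, rfl⟩
        rw [coversCount_pair hab _ _ hcong]
        by_cases hc : a < b ∧ H.Adj a b <;> simp [hc, Nat.odd_iff]
    · -- inr inr
      have hab : a ≠ b := by simpa using huv
      have hcong : ∀ i : Fin k,
          ((Sum.inr a ∈ (oc H i).1 ∧ Sum.inr b ∈ (oc H i).2) ∨
            (Sum.inr a ∈ (oc H i).2 ∧ Sum.inr b ∈ (oc H i).1)) ↔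
          ((i = a ∧ (b < a ∧ H.Adj a b)) ∨ (i = b ∧ (a < b ∧ H.Adj a b))) := by
        intro i
        simp only [mem_ocX_inr, mem_ocY_inr]
        constructor
        · rintro (⟨rfl, h1, h2⟩ | ⟨⟨h1, h2⟩, rfl⟩)
          · exact Or.inl ⟨rfl, h1, h2⟩
          · exact Or.inr ⟨rfl, h1, h2.symm⟩
        · rintro (⟨rfl, h1, h2⟩ | ⟨rfl, h1, h2⟩)
          · exact Or.inl ⟨rfl, h1, h2⟩
          · exact Or.inr ⟨⟨h1, h2.symm⟩, rfl⟩
      rw [coversCount_pair hab _ _ hcong]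
      by_cases hadj : H.Adj a b <;> rcases hab.lt_or_gt with h | h <;>
        simp [hadj, h, h.asymm, Nat.odd_iff]

lemma b2_sum_le {V : Type} [Fintype V] (H : SimpleGraph V) :
    b2 (H ⊕g H) ≤ Fintype.card V := by
  classical
  set k := Fintype.card V with hk
  let e : V ≃ Fin k := Fintype.equivFin V
  let H' : SimpleGraph (Fin k) := H.comap e.symm
  let φ : Fin k ⊕ Fin k → V ⊕ V := Sum.map e.symm e.symm
  let ψ : V ⊕ V → Fin k ⊕ Fin k := Sum.map e e
  have hφψ : ∀ x, φ (ψ x) = x := by rintro (x | x) <;> simp [φ, ψ]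
  have hψφ : ∀ y, ψ (φ y) = y := by rintro (y | y) <;> simp [φ, ψ]
  have hmem : ∀ (s : Finset (Fin k ⊕ Fin k)) (x : V ⊕ V), x ∈ s.image φ ↔ ψ x ∈ s := by
    intro s x
    constructor
    · intro hx
      obtain ⟨y, hy, rfl⟩ := mem_image.1 hx
      rwa [hψφ]
    · intro hx
      exact mem_image.2 ⟨ψ x, hx, hφψ x⟩
  let g : Fin k → Finset (V ⊕ V) × Finset (V ⊕ V) :=
    fun i => ((oc H' i).1.image φ, (oc H' i).2.image φ)
  have hcc : ∀ u v : V ⊕ V, coversCount g u v = coversCount (oc H') (ψ u) (ψ v) := by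
    intro u v
    apply Nat.card_congr (Equiv.subtypeEquivRight ?_)
    intro i
    simp only [g, hmem]
  have hg : IsOddCover (H ⊕g H) g := by
    constructor
    · intro i
      rw [Finset.disjoint_left]
      intro x hx hy
      rw [show (g i).1 = (oc H' i).1.image φ from rfl, hmem] at hx
      rw [show (g i).2 = (oc H' i).2.image φ from rfl, hmem] at hy
      exact (Finset.disjoint_left.1 ((oc_isOddCover H').1 i)) hx hy
    · intro u v huv
      have hψ : ψ u ≠ ψ v := by
        intro hh
        apply huv
        have := congrArg φ hh
        rwa [hφψ, hφψ] at this
      have hadj : (H ⊕g H).Adj u v ↔ (H' ⊕g H').Adj (ψ u) (ψ v) := by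
        rcases u with a | a <;> rcases v with b | b <;> simp [ψ, H']
      rw [hcc, hadj]
      exact (oc_isOddCover H').2 (ψ u) (ψ v) hψ
  exact Nat.sInf_le ⟨g, hg⟩

/-- For the disjoint union of two copies of a graph `H` on vertices
`v₁,…,v_k` (resp. `w₁,…,w_k`), there is an odd cover by `k` bicliques `(Xᵢ, Yᵢ)` with
`Xᵢ = {vᵢ, wᵢ}`; in particular `b₂(H + H) ≤ |V(H)|` for every finite graph `H`. -/
theorem stmt5 :
    (∀ (k : ℕ) (H : SimpleGraph (Fin k)),
      ∃ f : Fin k → Finset (Fin k ⊕ Fin k) × Finset (Fin k ⊕ Fin k),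
        IsOddCover (H ⊕g H) f ∧
        ∀ i : Fin k, (f i).1 = ({Sum.inl i, Sum.inr i} : Finset (Fin k ⊕ Fin k))) ∧
    (∀ (V : Type) [Fintype V] (H : SimpleGraph V), b2 (H ⊕g H) ≤ Fintype.card V) := by
  constructor
  · intro k H
    exact ⟨oc H, oc_isOddCover H, fun i => rfl⟩
  · intro V _ H
    exact b2_sum_le H
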